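/- The map ψ_T is a birational involution of ℙ²(ℂ) (there exists a nonzero homogeneous polynomial μ of degree 3 with ψ_{Ti}(ψ_T(b)) = μ(b)·bᵢ for i = 0, 1, 2), and it lifts the coordinate swap of ℙ¹×ℙ¹ through Φ̃: the identity Φ̃ ∘ ψ_T = s ∘ Φ̃ holds as rational maps ℙ² ⇢ ℙ¹×ℙ¹, where s(z, w) = (w, z); i.e. writing Φ̃ = (Φ̃₁, Φ̃₂) in affine coordinates, Φ̃₁(ψ_T(b)) = Φ̃₂(b) and Φ̃₂(ψ_T(b)) = Φ̃₁(b) wherever both sides are defined. -/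
import Mathlib


/-- First affine coordinate of `Φ̃`. -/
noncomputable def Phi1 (t b₀ b₁ b₂ : ℂ) : ℂ := (b₁ * t - b₂) / (b₀ * t - b₁)

/-- Second affine coordinate of `Φ̃`. -/
noncomputable def Phi2 (l b₀ b₁ b₂ : ℂ) : ℂ :=
  -b₁ * (b₀ * l - b₁ * l - b₁ + b₂) / (b₁ ^ 2 - b₀ * b₂)

/-- First component of the involution `ψ_T`. -/
noncomputable def psiT0 (l t b₀ b₁ b₂ : ℂ) : ℂ :=
  (-l - t ^ 2) * b₁ ^ 2 - b₂ ^ 2 + l * t * b₀ * b₁ + (t ^ 2 - t - l * t) * b₀ * b₂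
    + (l + t + 1) * b₁ * b₂

/-- Second component of the involution `ψ_T`. -/
noncomputable def psiT1 (l t b₀ b₁ b₂ : ℂ) : ℂ :=
  t * (l * b₀ - (1 + l) * b₁ + b₂) * (t * b₁ - b₂)

/-- Third component of the involution `ψ_T`. -/
noncomputable def psiT2 (l t b₀ b₁ b₂ : ℂ) : ℂ :=
  t * ((t - l + l * t) * b₁ - t * b₂) * (l * b₀ - (1 + l) * b₁ + b₂)

/-- `ψ_T` is a birational involution of `ℙ²(ℂ)` (there is a nonzero homogeneous `μ` of
degree 3 with `ψ_{Ti}(ψ_T(b)) = μ(b)·bᵢ` for `i = 0, 1, 2`), and it lifts the coordinate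
swap `s(z, w) = (w, z)` of `ℙ¹×ℙ¹` through `Φ̃`: in affine coordinates,
`Φ̃₁(ψ_T(b)) = Φ̃₂(b)` and `Φ̃₂(ψ_T(b)) = Φ̃₁(b)` wherever both sides are defined. -/
theorem psiT_involution_lifts_swap (l t : ℂ) (hl0 : l ≠ 0) (hl1 : l ≠ 1)
    (ht0 : t ≠ 0) (ht1 : t ≠ 1) (htl : t ≠ l) :
    (∃ μ : MvPolynomial (Fin 3) ℂ, μ ≠ 0 ∧ μ.IsHomogeneous 3 ∧
      ∀ b₀ b₁ b₂ : ℂ,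
        psiT0 l t (psiT0 l t b₀ b₁ b₂) (psiT1 l t b₀ b₁ b₂) (psiT2 l t b₀ b₁ b₂) =
            MvPolynomial.eval ![b₀, b₁, b₂] μ * b₀ ∧
        psiT1 l t (psiT0 l t b₀ b₁ b₂) (psiT1 l t b₀ b₁ b₂) (psiT2 l t b₀ b₁ b₂) =
            MvPolynomial.eval ![b₀, b₁, b₂] μ * b₁ ∧
        psiT2 l t (psiT0 l t b₀ b₁ b₂) (psiT1 l t b₀ b₁ b₂) (psiT2 l t b₀ b₁ b₂) =
            MvPolynomial.eval ![b₀, b₁, b₂] μ * b₂) ∧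
    ∀ b₀ b₁ b₂ : ℂ,
      b₀ * t - b₁ ≠ 0 → b₁ ^ 2 - b₀ * b₂ ≠ 0 →
      psiT0 l t b₀ b₁ b₂ * t - psiT1 l t b₀ b₁ b₂ ≠ 0 →
      psiT1 l t b₀ b₁ b₂ ^ 2 - psiT0 l t b₀ b₁ b₂ * psiT2 l t b₀ b₁ b₂ ≠ 0 →
      Phi1 t (psiT0 l t b₀ b₁ b₂) (psiT1 l t b₀ b₁ b₂) (psiT2 l t b₀ b₁ b₂) =
          Phi2 l b₀ b₁ b₂ ∧
      Phi2 l (psiT0 l t b₀ b₁ b₂) (psiT1 l t b₀ b₁ b₂) (psiT2 l t b₀ b₁ b₂) =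
          Phi1 t b₀ b₁ b₂ := by
  constructor
  · refine ⟨MvPolynomial.C (-(t ^ 2 * (t - 1) ^ 2 * (t - l) ^ 2)) *
      ((MvPolynomial.C l * MvPolynomial.X 0 - MvPolynomial.C (1 + l) * MvPolynomial.X 1
          + MvPolynomial.X 2) *
        ((MvPolynomial.X 2 - MvPolynomial.X 1) *
          (MvPolynomial.X 2 - MvPolynomial.C l * MvPolynomial.X 1))), ?_, ?_, ?_⟩
    · have h2 : (MvPolynomial.X 2 - MvPolynomial.X 1 : MvPolynomial (Fin 3) ℂ) ≠ 0 := by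
        intro h
        have := congrArg (MvPolynomial.eval (fun i : Fin 3 => if i = 2 then (1:ℂ) else 0)) h
        simp at this
      have h3 : (MvPolynomial.X 2 - MvPolynomial.C l * MvPolynomial.X 1 :
          MvPolynomial (Fin 3) ℂ) ≠ 0 := by
        intro h
        have := congrArg (MvPolynomial.eval (fun i : Fin 3 => if i = 2 then (1:ℂ) else 0)) h
        simp at this
      have h1 : (MvPolynomial.C l * MvPolynomial.X 0 - MvPolynomial.C (1 + l) * MvPolynomial.X 1
          + MvPolynomial.X 2 : MvPolynomial (Fin 3) ℂ) ≠ 0 := by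
        intro h
        have := congrArg (MvPolynomial.eval (fun i : Fin 3 => if i = 0 then (1:ℂ) else 0)) h
        simp [hl0] at this
      have hc : (MvPolynomial.C (-(t ^ 2 * (t - 1) ^ 2 * (t - l) ^ 2)) :
          MvPolynomial (Fin 3) ℂ) ≠ 0 := by
        simp only [ne_eq, MvPolynomial.C_eq_zero]
        intro h
        rw [neg_eq_zero] at h
        rcases mul_eq_zero.1 h with h | h
        · rcases mul_eq_zero.1 h with h | h
          · exact ht0 (pow_eq_zero_iff two_ne_zero |>.1 h)
          · exact ht1 (sub_eq_zero.1 (pow_eq_zero_iff two_ne_zero |>.1 h))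
        · exact htl (sub_eq_zero.1 (pow_eq_zero_iff two_ne_zero |>.1 h))
      exact mul_ne_zero hc (mul_ne_zero h1 (mul_ne_zero h2 h3))
    · have e1 : (MvPolynomial.C l * MvPolynomial.X 0 - MvPolynomial.C (1 + l) * MvPolynomial.X 1
          + MvPolynomial.X 2 : MvPolynomial (Fin 3) ℂ).IsHomogeneous 1 := by
        apply MvPolynomial.IsHomogeneous.add
        apply MvPolynomial.IsHomogeneous.sub
        · simpa using (MvPolynomial.isHomogeneous_C_mul_X (R := ℂ) l (0 : Fin 3))
        · simpa using (MvPolynomial.isHomogeneous_C_mul_X (R := ℂ) (1 + l) (1 : Fin 3))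
        · exact MvPolynomial.isHomogeneous_X ℂ 2
      have e2 : (MvPolynomial.X 2 - MvPolynomial.X 1 : MvPolynomial (Fin 3) ℂ).IsHomogeneous 1 :=
        (MvPolynomial.isHomogeneous_X ℂ 2).sub (MvPolynomial.isHomogeneous_X ℂ 1)
      have e3 : (MvPolynomial.X 2 - MvPolynomial.C l * MvPolynomial.X 1 :
          MvPolynomial (Fin 3) ℂ).IsHomogeneous 1 := by
        apply MvPolynomial.IsHomogeneous.sub (MvPolynomial.isHomogeneous_X ℂ 2)
        simpa using (MvPolynomial.isHomogeneous_C_mul_X (R := ℂ) l (1 : Fin 3))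
      have := (MvPolynomial.isHomogeneous_C (Fin 3)
        (-(t ^ 2 * (t - 1) ^ 2 * (t - l) ^ 2))).mul (e1.mul (e2.mul e3))
      simpa using this
    · intro b₀ b₁ b₂
      simp only [MvPolynomial.eval_mul, MvPolynomial.eval_sub, MvPolynomial.eval_add,
        MvPolynomial.eval_C, MvPolynomial.eval_X, Matrix.cons_val_zero, Matrix.cons_val_one,
        Matrix.head_cons, Matrix.cons_val_two, Matrix.tail_cons]
      refine ⟨?_, ?_, ?_⟩ <;> (simp only [psiT0, psiT1, psiT2]; ring)
  · intro b₀ b₁ b₂ hd1 hd2 hd3 hd4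
    constructor
    · rw [Phi1, Phi2, div_eq_div_iff hd3 hd2]
      simp only [psiT0, psiT1, psiT2] at *
      ring
    · rw [Phi2, Phi1, div_eq_div_iff hd4 hd1]
      simp only [psiT0, psiT1, psiT2] at *
      ring
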